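/- There is an absolute constant N such that the following holds for all n ≥ N and all constants c_m ≥ 2, c_k ≥ c_m + 1 (with n large enough that k < n and k·2^w ≤ n). Fix any set T ⊆ F_2^{log₂ m} of row indices with 1 ≤ |T| ≤ 2^w/(⌈log₂ n⌉)^2, and draw the k·w polynomials g^{(i,j)} independently and uniformly at random from the polynomials F_2^{log₂ m} → F_2 of total degree at most ⌈log₂ n⌉. Then with probability at least 1 − 2^{−k|T|/√⌈log₂ n⌉}, the coordinatewise logical OR of the rows of M = [M^{(1)} ‖ … ‖ M^{(k)}] indexed by T has Hamming weight strictly greater than (1 − 1/√⌈log₂ n⌉)·k·|T|. -/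

import Mathlib

open Finset

/-- Coefficient space for (multilinear representatives of) polynomials over `F_2`
in `d` variables of total degree at most `r`; a uniformly random such coefficient
vector corresponds to a uniformly random polynomial of total degree at most `r`,
viewed as a function `F_2^d → F_2`. -/
abbrev CoefSp (d r : ℕ) := {S : Finset (Fin d) // S.card ≤ r} → ZMod 2

/-- Evaluation of the polynomial with coefficient vector `c` at the point `p`. -/
def evalC {d r : ℕ} (c : CoefSp d r) (p : Fin d → ZMod 2) : ZMod 2 :=
  ∑ S : {S : Finset (Fin d) // S.card ≤ r}, c S * ∏ i ∈ S.1, p i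

set_option linter.unusedSectionVars false
set_option maxHeartbeats 1000000

section helpers


lemma zmod2_cases (x : ZMod 2) : x = 0 ∨ x = 1 := by revert x; decide

lemma zmod2_ne (x : ZMod 2) : x ≠ 0 ↔ x = 1 := by revert x; decide

lemma rm_dual : ∀ (d L : ℕ) (A : Finset (Fin d → ZMod 2)),
    (∀ S : Finset (Fin d), S.card ≤ L → ∑ p ∈ A, ∏ i ∈ S, p i = 0) →
    A.Nonempty → 2 ^ (L + 1) ≤ A.card := by
  intro d
  induction d with
  | zero =>
    intro L A H hA
    exfalso
    have h := H ∅ (by simp)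
    simp only [Finset.prod_empty] at h
    have h2 : A.card ≤ 1 := by
      calc A.card ≤ (univ : Finset (Fin 0 → ZMod 2)).card := card_le_card (subset_univ A)
      _ = 1 := by simp
    have h1 : 1 ≤ A.card := Finset.card_pos.mpr hA
    have hA1 : A.card = 1 := le_antisymm h2 h1
    rw [Finset.sum_const, hA1] at h
    simp at h
  | succ d ih =>
    intro L A H hA
    classical
    set pr : (Fin (d+1) → ZMod 2) → (Fin d → ZMod 2) := fun p => p ∘ Fin.succ with hpr
    have hinj : ∀ b : ZMod 2, Set.InjOn pr (A.filter (fun p => p 0 = b)) := by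
      intro b p hp q hq hpq
      simp only [coe_filter, Set.mem_setOf_eq] at hp hq
      funext i
      refine Fin.cases ?_ ?_ i
      · rw [hp.2, hq.2]
      · intro j
        have := congrFun hpq j
        simpa [pr] using this
    set A0 : Finset (Fin d → ZMod 2) := (A.filter (fun p => p 0 = 0)).image pr with hA0
    set A1 : Finset (Fin d → ZMod 2) := (A.filter (fun p => p 0 = 1)).image pr with hA1
    have hcards : A.card = A0.card + A1.card := by
      rw [hA0, hA1, Finset.card_image_of_injOn (hinj 0), Finset.card_image_of_injOn (hinj 1)]
      rw [← Finset.card_filter_add_card_filter_not (p := fun p => p 0 = 0)]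
      congr 2
      apply Finset.filter_congr
      intro p _
      simp [zmod2_ne]
    -- sum over A_b equals sum over filter
    have hsumb : ∀ (b : ZMod 2) (S : Finset (Fin d)),
        ∑ p' ∈ (A.filter (fun p => p 0 = b)).image pr, ∏ i ∈ S, p' i
          = ∑ p ∈ A.filter (fun p => p 0 = b), ∏ i ∈ S, p i.succ := by
      intro b S
      rw [Finset.sum_image (fun p hp q hq h => hinj b (by simpa using hp) (by simpa using hq) h)]
      rfl
    have hsplit : ∀ f : (Fin (d+1) → ZMod 2) → ZMod 2,
        ∑ p ∈ A, f p = ∑ p ∈ A.filter (fun p => p 0 = 0), f p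
          + ∑ p ∈ A.filter (fun p => p 0 = 1), f p := by
      intro f
      rw [← Finset.sum_filter_add_sum_filter_not A (fun p => p 0 = 0)]
      congr 1
      apply Finset.sum_congr
      · apply Finset.filter_congr; intro p _; simp [zmod2_ne]
      · intros; rfl
    have h0 : ∀ S : Finset (Fin d), S.card ≤ L →
        ∑ p' ∈ A0, ∏ i ∈ S, p' i + ∑ p' ∈ A1, ∏ i ∈ S, p' i = 0 := by
      intro S hS
      rw [hA0, hA1, hsumb 0 S, hsumb 1 S]
      have := H (S.map (Fin.succEmb d)) (by simpa using hS)
      rw [hsplit (fun p => ∏ i ∈ S.map (Fin.succEmb d), p i)] at this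
      simpa [Finset.prod_map] using this
    have h1 : ∀ S : Finset (Fin d), S.card + 1 ≤ L →
        ∑ p' ∈ A1, ∏ i ∈ S, p' i = 0 := by
      intro S hS
      have h0mem : (0 : Fin (d+1)) ∉ S.map (Fin.succEmb d) := by
        simp [Fin.succ_ne_zero]
      have := H (insert 0 (S.map (Fin.succEmb d)))
        (by rw [Finset.card_insert_of_notMem h0mem]; simpa using hS)
      rw [hsplit (fun p => ∏ i ∈ insert 0 (S.map (Fin.succEmb d)), p i)] at this
      have e0 : ∑ p ∈ A.filter (fun p => p 0 = 0),
          ∏ i ∈ insert 0 (S.map (Fin.succEmb d)), p i = 0 := by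
        apply Finset.sum_eq_zero
        intro p hp
        simp only [mem_filter] at hp
        rw [Finset.prod_insert h0mem, hp.2, zero_mul]
      have e1 : ∑ p ∈ A.filter (fun p => p 0 = 1),
          ∏ i ∈ insert 0 (S.map (Fin.succEmb d)), p i
          = ∑ p' ∈ A1, ∏ i ∈ S, p' i := by
        rw [hA1, hsumb 1 S]
        apply Finset.sum_congr rfl
        intro p hp
        simp only [mem_filter] at hp
        rw [Finset.prod_insert h0mem, hp.2, one_mul, Finset.prod_map]
        rfl
      rw [e0, e1, zero_add] at this
      exact this
    -- symmetric difference
    set D : Finset (Fin d → ZMod 2) := symmDiff A0 A1 with hD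
    have hDA : D ⊆ A0 ∪ A1 := by
      rw [hD]
      intro x hx
      have := symmDiff_le_sup (a := A0) (b := A1)
      exact this hx
    have hDsum : ∀ S : Finset (Fin d), S.card ≤ L → ∑ p' ∈ D, ∏ i ∈ S, p' i = 0 := by
      intro S hS
      have key : ∑ p' ∈ A0, ∏ i ∈ S, p' i + ∑ p' ∈ A1, ∏ i ∈ S, p' i
          = ∑ p' ∈ D, ∏ i ∈ S, p' i := by
        rw [← Finset.sum_union_inter]
        have hu : A0 ∪ A1 = D ∪ (A0 ∩ A1) := (symmDiff_sup_inf A0 A1).symm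
        rw [hu, Finset.sum_union (show Disjoint D (A0 ∩ A1) from hD ▸ disjoint_symmDiff_inf A0 A1)]
        rw [add_assoc, CharTwo.add_self_eq_zero, add_zero]
      rw [← key]
      exact h0 S hS
    by_cases hDne : D.Nonempty
    · have := ih L D hDsum hDne
      calc 2 ^ (L + 1) ≤ D.card := this
        _ ≤ (A0 ∪ A1).card := card_le_card hDA
        _ ≤ A0.card + A1.card := card_union_le A0 A1
        _ = A.card := hcards.symm
    · -- D empty, so A0 = A1
      rw [Finset.not_nonempty_iff_eq_empty] at hDne
      have hEq : A0 = A1 := by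
        have : symmDiff A0 A1 = ⊥ := hDne
        rwa [symmDiff_eq_bot] at this
      have hA1ne : A1.Nonempty := by
        obtain ⟨p, hp⟩ := hA
        rcases zmod2_cases (p 0) with h | h
        · rw [hEq.symm]
          exact ⟨pr p, Finset.mem_image_of_mem pr (Finset.mem_filter.mpr ⟨hp, h⟩)⟩
        · exact ⟨pr p, Finset.mem_image_of_mem pr (Finset.mem_filter.mpr ⟨hp, h⟩)⟩
      match L with
      | 0 =>
        have h1' : 1 ≤ A1.card := Finset.card_pos.mpr hA1ne
        have h0' : 1 ≤ A0.card := by rw [hEq]; exact h1'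
        have h2 : (2:ℕ) ^ (0 + 1) = 2 := by norm_num
        omega
      | Nat.succ L' =>
        have := ih L' A1 (fun S hS => h1 S (by omega)) hA1ne
        have h0' : 2 ^ (L' + 1) ≤ A0.card := by rw [hEq]; exact this
        have : 2 ^ (L' + 1 + 1) = 2 ^ (L' + 1) + 2 ^ (L' + 1) := by ring
        omega

noncomputable def evalLin (d r : ℕ) (T : Finset (Fin d → ZMod 2)) :
    CoefSp d r →ₗ[ZMod 2] ({p // p ∈ T} → ZMod 2) where
  toFun c := fun p => evalC c p.1
  map_add' c c' := by
    funext p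
    simp [evalC, add_mul, Finset.sum_add_distrib]
  map_smul' a c := by
    funext p
    simp [evalC, Finset.mul_sum, mul_assoc]

lemma evalLin_surj (d r : ℕ) (T : Finset (Fin d → ZMod 2)) (hT : T.card < 2 ^ (r + 1)) :
    Function.Surjective (evalLin d r T) := by
  classical
  rw [← LinearMap.range_eq_top]
  by_contra hne
  have hlt : LinearMap.range (evalLin d r T) < ⊤ := lt_top_iff_ne_top.mpr hne
  obtain ⟨f, hf0, hfmap⟩ :=
    Submodule.exists_dual_map_eq_bot_of_lt_top hlt inferInstance
  set v : {p // p ∈ T} → ZMod 2 := fun p => f (Pi.single p (1 : ZMod 2)) with hv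
  have hfx : ∀ x : {p // p ∈ T} → ZMod 2, f x = ∑ p, x p * v p := by
    intro x
    have hx : f x = f (∑ p, Pi.single p (x p)) := by rw [Finset.univ_sum_single]
    rw [hx, map_sum]
    apply Finset.sum_congr rfl
    intro p _
    have : Pi.single p (x p) = x p • (Pi.single p (1 : ZMod 2) : {p // p ∈ T} → ZMod 2) := by
      funext q
      simp [Pi.single_apply, mul_ite]
    rw [this, map_smul, smul_eq_mul]
  -- support of v as a finset of points
  set A : Finset (Fin d → ZMod 2) :=
    (univ.filter (fun p : {p // p ∈ T} => v p = 1)).image Subtype.val with hAdef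
  have hAcard : A.card ≤ T.card := by
    calc A.card ≤ (univ.filter (fun p : {p // p ∈ T} => v p = 1)).card := Finset.card_image_le
      _ ≤ (univ : Finset {p // p ∈ T}).card := card_le_card (filter_subset _ _)
      _ = T.card := by simp
  have hAne : A.Nonempty := by
    by_contra hAe
    rw [Finset.not_nonempty_iff_eq_empty] at hAe
    apply hf0
    apply LinearMap.ext
    intro x
    show f x = 0
    rw [hfx x]
    apply Finset.sum_eq_zero
    intro p _
    rcases zmod2_cases (v p) with h | h
    · rw [h, mul_zero]
    · exfalso
      have : p.val ∈ A := Finset.mem_image_of_mem _ (by simp [h])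
      rw [hAe] at this; exact absurd this (Finset.notMem_empty _)
  have hsums : ∀ S : Finset (Fin d), S.card ≤ r → ∑ p ∈ A, ∏ i ∈ S, p i = 0 := by
    intro S hS
    set c : CoefSp d r := Pi.single ⟨S, hS⟩ 1 with hc
    have hrange : f (evalLin d r T c) = 0 := by
      have hmem : f (evalLin d r T c) ∈ (LinearMap.range (evalLin d r T)).map f :=
        Submodule.mem_map_of_mem (LinearMap.mem_range_self _ c)
      rw [hfmap] at hmem
      exact (Submodule.mem_bot (R := ZMod 2)).mp hmem
    have heval : ∀ p : {p // p ∈ T}, evalLin d r T c p = ∏ i ∈ S, (p : Fin d → ZMod 2) i := by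
      intro p
      show evalC c p.1 = _
      rw [evalC, Finset.sum_eq_single ⟨S, hS⟩]
      · simp [hc]
      · intro b _ hb
        simp [hc, Pi.single_apply, hb.symm, Ne.symm hb]
      · intro h; exact absurd (Finset.mem_univ _) h
    rw [hfx] at hrange
    have : ∑ p : {p // p ∈ T}, evalLin d r T c p * v p = ∑ p ∈ A, ∏ i ∈ S, p i := by
      rw [hAdef, Finset.sum_image (by intro a _ b _ h; exact Subtype.ext h)]
      rw [← Finset.sum_filter_add_sum_filter_not univ (fun p : {p // p ∈ T} => v p = 1)]
      have e2 : ∑ p ∈ univ.filter (fun p : {p // p ∈ T} => ¬ v p = 1), evalLin d r T c p * v p = 0 := by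
        apply Finset.sum_eq_zero
        intro p hp
        simp only [mem_filter] at hp
        rcases zmod2_cases (v p) with h | h
        · rw [h, mul_zero]
        · exact absurd h hp.2
      rw [e2, add_zero]
      apply Finset.sum_congr rfl
      intro p hp
      simp only [mem_filter] at hp
      rw [heval p, hp.2, mul_one]
    rw [this] at hrange
    exact hrange
  have := rm_dual d r A hsums hAne
  omega


variable {k s : ℕ} {β : Type*} [Fintype β] [DecidableEq β]

/-- collision predicate -/
def coll (g : Fin k × Fin s → β) (x : Fin k × Fin s) : Prop :=
  ∃ j', j' < x.2 ∧ g (x.1, j') = g x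

instance (g : Fin k × Fin s → β) : DecidablePred (coll g) := by
  intro x; unfold coll; infer_instance

lemma coll_count (F : Finset (Fin k × Fin s)) :
    (univ.filter (fun g : Fin k × Fin s → β => ∀ x ∈ F, coll g x)).card
      ≤ s ^ F.card * (Fintype.card β) ^ (k * s - F.card) := by
  classical
  -- the selection function
  set sel : (Fin k × Fin s → β) → {x // x ∈ F} → Fin s := fun g x =>
    if h : coll g x.1 then h.choose else x.1.2 with hsel
  set Φ : (Fin k × Fin s → β) → ({x // x ∈ F} → Fin s) × ({x // x ∈ (Fᶜ : Finset (Fin k × Fin s))} → β) :=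
    fun g => (sel g, fun x => g x.1) with hΦ
  have hinj : Set.InjOn Φ (univ.filter (fun g : Fin k × Fin s → β => ∀ x ∈ F, coll g x)) := by
    intro g hg g' hg' hΦeq
    simp only [coe_filter, Set.mem_setOf_eq] at hg hg'
    have h1 := congrArg Prod.fst hΦeq
    have h2 := congrArg Prod.snd hΦeq
    simp only [hΦ] at h1 h2
    have key : ∀ m : ℕ, ∀ x : Fin k × Fin s, (x.2 : ℕ) = m → g x = g' x := by
      intro m
      induction m using Nat.strong_induction_on with
      | _ m IH =>
        intro x hxm
        by_cases hxF : x ∈ F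
        · have hcg : coll g x := hg.2 x hxF
          have hcg' : coll g' x := hg'.2 x hxF
          have hs1 : sel g ⟨x, hxF⟩ = sel g' ⟨x, hxF⟩ := congrFun h1 ⟨x, hxF⟩
          rw [hsel] at hs1
          simp only [dif_pos hcg, dif_pos hcg'] at hs1
          obtain ⟨hlt, heq⟩ := hcg.choose_spec
          obtain ⟨hlt', heq'⟩ := hcg'.choose_spec
          set j' := hcg.choose
          have hltm : (j' : ℕ) < m := by rw [← hxm]; exact hlt
          have hIH : g (x.1, j') = g' (x.1, j') := IH _ hltm (x.1, j') rfl
          rw [← heq, hIH, hs1]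
          exact heq'
        · have : x ∈ (Fᶜ : Finset (Fin k × Fin s)) := by simp [hxF]
          exact congrFun h2 ⟨x, this⟩
    funext x
    exact key x.2 x rfl
  calc (univ.filter (fun g : Fin k × Fin s → β => ∀ x ∈ F, coll g x)).card
      ≤ (univ : Finset (({x // x ∈ F} → Fin s) × ({x // x ∈ (Fᶜ : Finset (Fin k × Fin s))} → β))).card := by
        apply Finset.card_le_card_of_injOn Φ (fun g _ => mem_univ _) hinj
    _ = s ^ F.card * (Fintype.card β) ^ (k * s - F.card) := by
        rw [card_univ, Fintype.card_prod, Fintype.card_fun, Fintype.card_fun]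
        simp [Fintype.card_coe, Finset.card_compl]

lemma card_filter_prod {α γ : Type*} [Fintype α] [Fintype γ] [DecidableEq α] [DecidableEq γ]
    (P : α × γ → Prop) [DecidablePred P] :
    (univ.filter P).card = ∑ i : α, (univ.filter (fun j : γ => P (i, j))).card := by
  classical
  rw [Finset.card_eq_sum_card_fiberwise (f := Prod.fst) (t := univ) (fun x _ => mem_univ _)]
  apply Finset.sum_congr rfl
  intro i _
  apply Finset.card_bij (fun (x : _ × _) _ => x.2)
  · intro x hx
    simp only [mem_filter, mem_univ, true_and] at hx ⊢
    have : x = (i, x.2) := by rw [← hx.2]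
    rw [← this]; exact hx.1
  · intro x hx y hy hxy
    simp only [mem_filter] at hx hy
    exact Prod.ext (hx.2.trans hy.2.symm) hxy
  · intro j hj
    simp only [mem_filter, mem_univ, true_and] at hj ⊢
    exact ⟨(i, j), by simp [hj], rfl⟩

lemma image_card_fresh (h : Fin s → β) :
    (univ.image h).card = (univ.filter (fun j : Fin s => ¬ ∃ j', j' < j ∧ h j' = h j)).card := by
  classical
  have himg : (univ.filter (fun j : Fin s => ¬ ∃ j', j' < j ∧ h j' = h j)).image h = univ.image h := by
    apply Finset.Subset.antisymm (Finset.image_subset_image (filter_subset _ _))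
    intro b hb
    obtain ⟨j, _, hj⟩ := Finset.mem_image.mp hb
    have hne : (univ.filter (fun j' : Fin s => h j' = b)).Nonempty := ⟨j, by simp [hj]⟩
    set jm := (univ.filter (fun j' : Fin s => h j' = b)).min' hne with hjm
    have hjm_mem := Finset.min'_mem _ hne
    simp only [mem_filter, mem_univ, true_and] at hjm_mem
    apply Finset.mem_image.mpr
    refine ⟨jm, ?_, hjm_mem⟩
    simp only [mem_filter, mem_univ, true_and]
    rintro ⟨j', hlt, heq⟩
    have : jm ≤ j' := Finset.min'_le _ _ (by simp only [mem_filter, mem_univ, true_and]; rw [heq]; exact hjm_mem)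
    exact absurd hlt (not_lt.mpr this)
  have hinj : Set.InjOn h (univ.filter (fun j : Fin s => ¬ ∃ j', j' < j ∧ h j' = h j)) := by
    intro a ha b hb hab
    simp only [coe_filter, Set.mem_setOf_eq] at ha hb
    by_contra hne
    rcases lt_or_gt_of_ne hne with hl | hl
    · exact hb.2 ⟨a, hl, hab⟩
    · exact ha.2 ⟨b, hl, hab.symm⟩
  rw [← himg, Finset.card_image_of_injOn hinj]

lemma fresh_add_coll (g : Fin k × Fin s → β) :
    ∑ i : Fin k, (univ.image (fun j => g (i, j))).card + (univ.filter (coll g)).card = k * s := by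
  classical
  rw [card_filter_prod (coll g), ← Finset.sum_add_distrib]
  have : ∀ i : Fin k, (univ.image (fun j => g (i, j))).card
      + (univ.filter (fun j : Fin s => coll g (i, j))).card = s := by
    intro i
    rw [image_card_fresh (fun j => g (i, j))]
    have hcong : (univ.filter (fun j : Fin s => coll g (i, j)))
        = (univ.filter (fun j : Fin s => ∃ j', j' < j ∧ g (i, j') = g (i, j))) := rfl
    rw [hcong]
    have := Finset.card_filter_add_card_filter_not
      (s := (univ : Finset (Fin s))) (p := fun j : Fin s => ∃ j', j' < j ∧ g (i, j') = g (i, j))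
    rw [card_univ, Fintype.card_fin] at this
    omega
  rw [Finset.sum_congr rfl (fun i _ => this i), Finset.sum_const, card_univ, Fintype.card_fin,
    smul_eq_mul]

lemma bad_count (A : ℕ) :
    (univ.filter (fun g : Fin k × Fin s → β => A ≤ (univ.filter (coll g)).card)).card
      ≤ (k * s).choose A * (s ^ A * (Fintype.card β) ^ (k * s - A)) := by
  classical
  have hsub : (univ.filter (fun g : Fin k × Fin s → β => A ≤ (univ.filter (coll g)).card))
      ⊆ (powersetCard A (univ : Finset (Fin k × Fin s))).biUnion
          (fun F => univ.filter (fun g => ∀ x ∈ F, coll g x)) := by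
    intro g hg
    simp only [mem_filter, mem_univ, true_and] at hg
    obtain ⟨F, hFsub, hFcard⟩ := Finset.exists_subset_card_eq hg
    apply Finset.mem_biUnion.mpr
    refine ⟨F, ?_, ?_⟩
    · exact Finset.mem_powersetCard_univ.mpr hFcard
    · simp only [mem_filter, mem_univ, true_and]
      intro x hx
      have := hFsub hx
      simpa using this
  calc _ ≤ _ := Finset.card_le_card hsub
    _ ≤ ∑ F ∈ powersetCard A (univ : Finset (Fin k × Fin s)),
          (univ.filter (fun g : Fin k × Fin s → β => ∀ x ∈ F, coll g x)).card :=
        Finset.card_biUnion_le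
    _ ≤ ∑ F ∈ powersetCard A (univ : Finset (Fin k × Fin s)),
          s ^ A * (Fintype.card β) ^ (k * s - A) := by
        apply Finset.sum_le_sum
        intro F hF
        have hFcard : F.card = A := Finset.mem_powersetCard_univ.mp hF
        have := coll_count (k := k) (s := s) (β := β) F
        rwa [hFcard] at this
    _ = (k * s).choose A * (s ^ A * (Fintype.card β) ^ (k * s - A)) := by
        rw [Finset.sum_const, smul_eq_mul, Finset.card_powersetCard, card_univ,
          Fintype.card_prod, Fintype.card_fin, Fintype.card_fin]


lemma transfer_count {α β : Type*} [Fintype α] [Fintype β] [DecidableEq β]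
    (F : α → β) (K : ℕ)
    (hK : ∀ b : β, (univ.filter (fun a => F a = b)).card = K)
    (P : β → Prop) [DecidablePred P] :
    Fintype.card {a // P (F a)} * Fintype.card β = Fintype.card {b // P b} * Fintype.card α := by
  classical
  have h1 : Fintype.card {a // P (F a)} = Fintype.card {b // P b} * K := by
    rw [Fintype.card_subtype, Fintype.card_subtype]
    rw [Finset.card_eq_sum_card_fiberwise (f := F) (t := univ.filter P)
      (fun x hx => by simpa using hx)]
    rw [Finset.sum_congr rfl (fun b hb => ?_), Finset.sum_const, smul_eq_mul]
    · rw [← hK b, Finset.filter_filter]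
      congr 1
      apply Finset.filter_congr
      intro a _
      simp only [mem_filter, mem_univ, true_and] at hb
      constructor
      · exact fun h => h.2
      · exact fun h => ⟨h ▸ hb, h⟩
  have h2 : Fintype.card α = Fintype.card β * K := by
    rw [← Finset.card_univ (α := α),
      Finset.card_eq_sum_card_fiberwise (f := F) (t := univ) (fun x _ => mem_univ _),
      Finset.sum_congr rfl (fun b _ => hK b), Finset.sum_const, smul_eq_mul, card_univ]
  rw [h1, h2]; ring

lemma fiber_const {V W : Type*} [Fintype V] [DecidableEq V] [DecidableEq W]
    [AddCommGroup V] [AddCommGroup W]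
    (φ : V → W) (hsub : ∀ a b, φ (a - b) = φ a - φ b)
    (hsurj : Function.Surjective φ) (y : W) :
    (univ.filter (fun v => φ v = y)).card = (univ.filter (fun v => φ v = 0)).card := by
  obtain ⟨v0, hv0⟩ := hsurj y
  apply Finset.card_bij (fun v _ => v - v0)
  · intro v hv
    simp only [mem_filter, mem_univ, true_and] at hv ⊢
    rw [hsub, hv, hv0, sub_self]
  · intro a ha b hb hab
    exact sub_left_injective hab
  · intro w hw
    simp only [mem_filter, mem_univ, true_and] at hw
    refine ⟨w + v0, Finset.mem_filter.mpr ⟨mem_univ _, ?_⟩, by abel⟩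
    have : φ (w + v0) = φ (w + v0) - φ v0 + y := by rw [hv0]; abel
    rw [this, ← hsub, add_sub_cancel_right, hw, zero_add]



lemma numeric_bound (L K s B A0 : ℕ) (hA0 : A0 = ⌈(K : ℝ) / Real.sqrt L⌉₊)
    (hK : 1 ≤ K) (hL : 16 ≤ L) (hB : 0 < B)
    (hs : (s : ℝ) * (L : ℝ) ^ 2 ≤ (B : ℝ)) :
    ((K.choose A0 : ℝ) *
        ((s : ℝ) ^ A0 * (B : ℝ) ^ (K - A0)))
      ≤ (2 : ℝ) ^ (-(K : ℝ) / Real.sqrt L) * (B : ℝ) ^ K := by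
  subst hA0
  have hL0 : (0 : ℝ) < L := by positivity
  have hsqL : (4 : ℝ) ≤ Real.sqrt L := by
    rw [show (4:ℝ) = Real.sqrt 16 by rw [show (16:ℝ) = 4^2 by norm_num, Real.sqrt_sq]; norm_num]
    exact Real.sqrt_le_sqrt (by exact_mod_cast hL)
  have hsqL0 : (0 : ℝ) < Real.sqrt L := by linarith
  set A := ⌈(K : ℝ) / Real.sqrt L⌉₊ with hA
  have hA1 : 1 ≤ A := by
    rw [hA]
    have hKpos : (0:ℝ) < (K:ℝ) / Real.sqrt L := by
      apply div_pos _ hsqL0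
      exact_mod_cast hK
    exact Nat.ceil_pos.mpr hKpos
  have hKA : (K : ℝ) ≤ (A : ℝ) * Real.sqrt L := by
    have := Nat.le_ceil ((K : ℝ) / Real.sqrt L)
    rw [div_le_iff₀ hsqL0] at this
    exact this
  by_cases hAK : A ≤ K
  case neg =>
    rw [Nat.choose_eq_zero_of_lt (by omega)]
    simp only [Nat.cast_zero, zero_mul]
    positivity
  -- main case
  have hB0 : (0 : ℝ) < B := by positivity
  have hBKA : (B : ℝ) ^ K = (B : ℝ) ^ A * (B : ℝ) ^ (K - A) := by
    rw [← pow_add]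
    congr 1
    omega
  rw [hBKA, show (2:ℝ) ^ (-(K : ℝ) / Real.sqrt L) * ((B:ℝ)^A * (B:ℝ)^(K-A))
      = ((2:ℝ) ^ (-(K : ℝ) / Real.sqrt L) * (B:ℝ)^A) * (B:ℝ)^(K-A) by ring,
    ← mul_assoc]
  apply mul_le_mul_of_nonneg_right _ (by positivity)
  -- now: choose * s^A ≤ 2^{-K/√L} * B^A
  have hsB : (s : ℝ) ^ A ≤ ((B : ℝ) / (L : ℝ) ^ 2) ^ A := by
    apply pow_le_pow_left₀ (by positivity)
    rw [le_div_iff₀ (by positivity)]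
    exact hs
  have hchoose : (K.choose A : ℝ) ≤ (Real.sqrt L * Real.exp 1) ^ A := by
    have h1 : (K.choose A : ℝ) * (A.factorial : ℝ) ≤ (K : ℝ) ^ A := by
      have := Nat.descFactorial_le_pow K A
      rw [Nat.descFactorial_eq_factorial_mul_choose] at this
      exact_mod_cast by rw [mul_comm]; exact_mod_cast this
    have h2 : (A : ℝ) ^ A ≤ (A.factorial : ℝ) * Real.exp A := by
      have := Real.pow_div_factorial_le_exp (x := (A : ℝ)) (by positivity) A
      rw [div_le_iff₀ (by positivity)] at this
      linarith [this]
    have hKAA : (K : ℝ) ^ A ≤ ((A : ℝ) * Real.sqrt L) ^ A :=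
      pow_le_pow_left₀ (by positivity) hKA A
    have hAf : (0:ℝ) < (A.factorial : ℝ) := by positivity
    have hexpA : Real.exp (A : ℝ) = (Real.exp 1) ^ A := by
      rw [← Real.exp_one_rpow (A : ℝ), Real.rpow_natCast]
    calc (K.choose A : ℝ) ≤ (K : ℝ) ^ A / (A.factorial : ℝ) := by
          rw [le_div_iff₀ hAf]; exact h1
      _ ≤ ((A : ℝ) * Real.sqrt L) ^ A / (A.factorial : ℝ) := by
          gcongr
      _ = ((A:ℝ)^A / (A.factorial : ℝ)) * (Real.sqrt L) ^ A := by
          rw [mul_pow]; ring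
      _ ≤ (Real.exp 1) ^ A * (Real.sqrt L) ^ A := by
          apply mul_le_mul_of_nonneg_right _ (by positivity)
          rw [div_le_iff₀ hAf, ← hexpA]
          calc (A:ℝ)^A ≤ (A.factorial : ℝ) * Real.exp A := h2
            _ = Real.exp (A) * (A.factorial : ℝ) := by ring
      _ = (Real.sqrt L * Real.exp 1) ^ A := by rw [← mul_pow, mul_comm]
  have h2A : (2:ℝ) ^ (-(K : ℝ) / Real.sqrt L) * (B:ℝ)^A
      = (2:ℝ) ^ (-(K : ℝ) / Real.sqrt L) * ((2:ℝ)^A * (2:ℝ)^(-(A:ℝ) : ℝ)) * (B:ℝ)^A := by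
    rw [show ((2:ℝ)^A * (2:ℝ)^(-(A:ℝ) : ℝ)) = 1 from ?_, mul_one]
    rw [← Real.rpow_natCast 2 A, ← Real.rpow_add (by norm_num)]
    simp
  -- key: (√L e)^A * s^A ≤ 2^{-K/√L} B^A
  calc (K.choose A : ℝ) * (s:ℝ)^A ≤ (Real.sqrt L * Real.exp 1) ^ A * ((B : ℝ) / (L : ℝ) ^ 2) ^ A := by
        apply mul_le_mul hchoose hsB (by positivity) (by positivity)
    _ = (Real.sqrt L * Real.exp 1 / (L:ℝ)^2) ^ A * (B:ℝ)^A := by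
        rw [← mul_pow, ← mul_pow]; congr 1; ring
    _ ≤ ((2:ℝ)^(-(1:ℝ)))^A * (B:ℝ)^A := by
        apply mul_le_mul_of_nonneg_right _ (by positivity)
        apply pow_le_pow_left₀ (by positivity)
        rw [Real.rpow_neg_one]
        rw [div_le_iff₀ (by positivity)]
        have he : Real.exp 1 ≤ 3 := by
          have := Real.exp_one_lt_d9
          linarith
        have hsq : Real.sqrt L * Real.sqrt L = (L:ℝ) := Real.mul_self_sqrt (le_of_lt hL0)
        have hL16 : (16:ℝ) ≤ (L:ℝ) := by exact_mod_cast hL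
        nlinarith [hsq, he, hsqL, hL16, Real.exp_pos 1, hsqL0, sq_nonneg ((L:ℝ) - 4)]
    _ ≤ (2:ℝ) ^ (-(K : ℝ) / Real.sqrt L) * (B:ℝ)^A := by
        apply mul_le_mul_of_nonneg_right _ (by positivity)
        rw [← Real.rpow_natCast ((2:ℝ)^(-(1:ℝ))) A, ← Real.rpow_mul (by norm_num : (0:ℝ) ≤ 2)]
        apply Real.rpow_le_rpow_of_exponent_le (by norm_num)
        have hceil := Nat.le_ceil ((K : ℝ) / Real.sqrt L)
        rw [neg_div]
        rw [← hA] at hceil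
        nlinarith [hceil]

end helpers

lemma main_lemma (L e w d k : ℕ) (hk : k = L ^ e) (hL16 : 16 ≤ L)
    (T : Finset (Fin d → ZMod 2)) (hs1 : 0 < T.card)
    (hT2L : T.card < 2 ^ (L + 1))
    (hsL2 : (T.card : ℝ) * (L : ℝ) ^ 2 ≤ (2 : ℝ) ^ w) :
    1 - (2 : ℝ) ^ (-((k * T.card : ℕ) : ℝ) / Real.sqrt L) ≤
      (Nat.card {c : Fin k → Fin w → CoefSp d L //
          ((1 - 1 / Real.sqrt L) * (L : ℝ) ^ e * T.card : ℝ) <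
            (Nat.card {iq : Fin k × (Fin w → ZMod 2) //
                ∃ p ∈ T, ∀ t, evalC (c iq.1 t) p = iq.2 t} : ℝ)} : ℝ) /
        (Nat.card (Fin k → Fin w → CoefSp d L) : ℝ) := by
  classical
  have hL1 : 1 ≤ L := by omega
  have hk1 : 1 ≤ k := by rw [hk]; exact Nat.one_le_pow _ _ (by omega)
  have hsqL0 : (0:ℝ) < Real.sqrt L := Real.sqrt_pos.mpr (by positivity)
  have hke : (k : ℝ) = (L : ℝ) ^ e := by rw [hk]; push_cast; ring
  set s := T.card with hsdef
  -- the evaluation linear map and the pushforward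
  set φ := evalLin d L T with hφdef
  have hφsurj : Function.Surjective φ := evalLin_surj d L T hT2L
  set Ω := (Fin k → Fin w → CoefSp d L) with hΩdef
  set W := ({p // p ∈ T} → ZMod 2) with hWdef
  set Ω2 := (Fin k → Fin w → W) with hΩ2def
  set F : Ω → Ω2 := fun c i t => φ (c i t) with hFdef
  have hFsub : ∀ a b : Ω, F (a - b) = F a - F b := by
    intro a b
    funext i t
    show φ (a i t - b i t) = _
    rw [map_sub]
    rfl
  have hFsurj : Function.Surjective F := by
    intro y
    refine ⟨fun i t => Function.surjInv hφsurj (y i t), ?_⟩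
    funext i t
    exact Function.surjInv_eq hφsurj (y i t)
  set β := (Fin w → ZMod 2) with hβdef
  set θ : ℝ := (1 - 1 / Real.sqrt L) * (L : ℝ) ^ e * (s : ℝ) with hθdef
  set P2 : Ω2 → Prop := fun y =>
    θ < (Nat.card {iq : Fin k × β // ∃ p : {p // p ∈ T}, ∀ t, y iq.1 t p = iq.2 t} : ℝ)
    with hP2def
  -- step 1 : rewrite the numerator via P2 ∘ F
  have hstep1 : Nat.card {c : Ω //
        θ < (Nat.card {iq : Fin k × β // ∃ p ∈ T, ∀ t, evalC (c iq.1 t) p = iq.2 t} : ℝ)}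
      = Nat.card {c : Ω // P2 (F c)} := by
    apply Nat.card_congr
    apply Equiv.subtypeEquivRight
    intro c
    have hinner : Nat.card {iq : Fin k × β // ∃ p ∈ T, ∀ t, evalC (c iq.1 t) p = iq.2 t}
        = Nat.card {iq : Fin k × β // ∃ p : {p // p ∈ T}, ∀ t, (F c) iq.1 t p = iq.2 t} := by
      apply Nat.card_congr
      apply Equiv.subtypeEquivRight
      intro iq
      constructor
      · rintro ⟨p, hp, hpt⟩; exact ⟨⟨p, hp⟩, hpt⟩
      · rintro ⟨⟨p, hp⟩, hpt⟩; exact ⟨p, hp, hpt⟩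
    rw [hP2def, hinner]
  -- step 2 : transfer along F
  have hK := fiber_const F hFsub hFsurj
  have htransfer := transfer_count F ((univ.filter (fun c : Ω => F c = 0)).card) hK P2
  -- step 3 : move to the function space Fin k × Fin s → β
  set e2 : {p // p ∈ T} ≃ Fin s := T.equivFin with he2def
  set Ω3 := (Fin k × Fin s → β) with hΩ3def
  set E : Ω2 ≃ Ω3 :=
    { toFun := fun y x t => y x.1 t (e2.symm x.2)
      invFun := fun g i t p => g (i, e2 p) t
      left_inv := by intro y; funext i t p; simp
      right_inv := by intro g; funext x t; simp } with hEdef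
  set P3 : Ω3 → Prop := fun g =>
    θ < ((∑ i : Fin k, (univ.image (fun j : Fin s => g (i, j))).card : ℕ) : ℝ) with hP3def
  have hP23 : ∀ y : Ω2, P2 y ↔ P3 (E y) := by
    intro y
    have hcore : Nat.card {iq : Fin k × β // ∃ p : {p // p ∈ T}, ∀ t, y iq.1 t p = iq.2 t}
        = ∑ i : Fin k, (univ.image (fun j : Fin s => E y (i, j))).card := by
      rw [Nat.card_eq_fintype_card, Fintype.card_subtype]
      have hfeq : (univ.filter fun iq : Fin k × β => ∃ p : {p // p ∈ T}, ∀ t, y iq.1 t p = iq.2 t)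
          = univ.filter (fun iq : Fin k × β => iq.2 ∈ univ.image (fun j : Fin s => E y (iq.1, j))) := by
        apply filter_congr
        intro iq _
        constructor
        · rintro ⟨p, hpt⟩
          apply mem_image.mpr
          refine ⟨e2 p, mem_univ _, ?_⟩
          funext t
          show y iq.1 t (e2.symm (e2 p)) = iq.2 t
          rw [Equiv.symm_apply_apply]
          exact hpt t
        · intro h
          obtain ⟨j, _, hj⟩ := mem_image.mp h
          exact ⟨e2.symm j, fun t => congrFun hj t⟩
      rw [hfeq, card_filter_prod]
      apply Finset.sum_congr rfl
      intro i _
      congr 1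
      ext q
      simp
    simp only [hP2def, hP3def]
    rw [hcore]
  have hcard23 : Fintype.card {y : Ω2 // P2 y} = Fintype.card {g : Ω3 // P3 g} :=
    Fintype.card_congr (Equiv.subtypeEquiv E hP23)
  have hcardΩ23 : Fintype.card Ω2 = Fintype.card Ω3 := Fintype.card_congr E
  -- step 4 : bound the bad set in Ω3
  set A := ⌈((k * s : ℕ) : ℝ) / Real.sqrt L⌉₊ with hAdef
  have hks1 : 1 ≤ k * s :=
    Nat.one_le_iff_ne_zero.mpr (Nat.mul_ne_zero (Nat.one_le_iff_ne_zero.mp hk1) (Nat.pos_iff_ne_zero.mp hs1))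
  have hbadsub : (univ.filter (fun g : Ω3 => ¬ P3 g))
      ⊆ univ.filter (fun g : Ω3 => A ≤ (univ.filter (coll g)).card) := by
    intro g hg
    simp only [mem_filter, mem_univ, true_and] at hg ⊢
    have himg := fresh_add_coll g
    have hθle : ((∑ i : Fin k, (univ.image (fun j : Fin s => g (i, j))).card : ℕ) : ℝ) ≤ θ := by
      rw [hP3def] at hg
      exact le_of_not_gt hg
    rw [hAdef]
    apply Nat.ceil_le.mpr
    have hcast : ((∑ i : Fin k, (univ.image (fun j : Fin s => g (i, j))).card : ℕ) : ℝ)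
        + ((univ.filter (coll g)).card : ℝ) = ((k*s : ℕ) : ℝ) := by
      exact_mod_cast congrArg (Nat.cast : ℕ → ℝ) himg
    have hθexp : θ = ((k*s : ℕ) : ℝ) - ((k*s : ℕ) : ℝ) / Real.sqrt L := by
      rw [hθdef, ← hke]
      push_cast
      field_simp
    rw [hθexp] at hθle
    linarith
  have hbadbound := bad_count (k := k) (s := s) (β := β) A
  have hbadcard : ((univ.filter (fun g : Ω3 => ¬ P3 g)).card : ℝ)
      ≤ (2 : ℝ) ^ (-((k * s : ℕ) : ℝ) / Real.sqrt L) * ((Fintype.card β : ℝ)) ^ (k * s) := by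
    have h1 : (univ.filter (fun g : Ω3 => ¬ P3 g)).card
        ≤ (k * s).choose A * (s ^ A * (Fintype.card β) ^ (k * s - A)) :=
      le_trans (Finset.card_le_card hbadsub) hbadbound
    have hcardβ : Fintype.card β = 2 ^ w := by
      show Fintype.card (Fin w → ZMod 2) = 2 ^ w
      rw [Fintype.card_fun]
      simp
    have hnum := numeric_bound L (k * s) s (2 ^ w) A hAdef hks1 hL16 (by positivity)
      (by push_cast; exact hsL2)
    calc ((univ.filter (fun g : Ω3 => ¬ P3 g)).card : ℝ)
        ≤ ((k * s).choose A : ℝ) * ((s : ℝ) ^ A * ((Fintype.card β : ℝ)) ^ (k * s - A)) := by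
          exact_mod_cast h1
      _ ≤ (2 : ℝ) ^ (-((k * s : ℕ) : ℝ) / Real.sqrt L) * ((Fintype.card β : ℝ)) ^ (k * s) := by
          simp only [hcardβ]
          push_cast
          push_cast at hnum
          convert hnum using 3
  -- final assembly
  have hgoodbad : (univ.filter P3).card + (univ.filter (fun g : Ω3 => ¬ P3 g)).card
      = Fintype.card Ω3 := by
    rw [Finset.card_filter_add_card_filter_not, card_univ]
  have hcardΩ3 : Fintype.card Ω3 = (Fintype.card β) ^ (k * s) := by
    show Fintype.card (Fin k × Fin s → β) = _
    rw [Fintype.card_fun, Fintype.card_prod, Fintype.card_fin, Fintype.card_fin]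
  rw [hstep1, Nat.card_eq_fintype_card, Nat.card_eq_fintype_card]
  have h1 : (Fintype.card {c : Ω // P2 (F c)} : ℝ) / (Fintype.card Ω : ℝ)
      = (Fintype.card {g : Ω3 // P3 g} : ℝ) / (Fintype.card Ω3 : ℝ) := by
    have htot : (0:ℕ) < Fintype.card Ω := Fintype.card_pos
    have htot3 : (0:ℕ) < Fintype.card Ω3 := Fintype.card_pos
    rw [div_eq_div_iff (Nat.cast_ne_zero.mpr (Nat.pos_iff_ne_zero.mp htot))
      (Nat.cast_ne_zero.mpr (Nat.pos_iff_ne_zero.mp htot3))]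
    have h2 := htransfer
    rw [hcard23, hcardΩ23] at h2
    exact_mod_cast h2
  rw [h1]
  have hG3 : Fintype.card {g : Ω3 // P3 g} = (univ.filter P3).card := Fintype.card_subtype _
  have hBad_le_tot : (univ.filter (fun g : Ω3 => ¬ P3 g)).card ≤ Fintype.card Ω3 :=
    le_trans (Nat.le_add_left _ _) (le_of_eq hgoodbad)
  have hfilterP3 : (univ.filter P3).card
      = Fintype.card Ω3 - (univ.filter (fun g : Ω3 => ¬ P3 g)).card :=
    Nat.eq_sub_of_add_eq hgoodbad
  have key : (Fintype.card {g : Ω3 // P3 g} : ℝ)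
      = (Fintype.card Ω3 : ℝ) - ((univ.filter (fun g : Ω3 => ¬ P3 g)).card : ℝ) := by
    rw [hG3, hfilterP3, Nat.cast_sub hBad_le_tot]
  rw [key]
  have htot3R : (0:ℝ) < (Fintype.card Ω3 : ℝ) := by
    exact_mod_cast (Fintype.card_pos : 0 < Fintype.card Ω3)
  rw [le_div_iff₀ htot3R]
  have hb : ((univ.filter (fun g : Ω3 => ¬ P3 g)).card : ℝ)
      ≤ (2 : ℝ) ^ (-((k * s : ℕ) : ℝ) / Real.sqrt L) * (Fintype.card Ω3 : ℝ) := by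
    have : ((Fintype.card Ω3 : ℕ) : ℝ) = ((Fintype.card β : ℝ)) ^ (k * s) := by
      rw [hcardΩ3]; push_cast; ring
    rw [this]
    exact hbadcard
  nlinarith [hb, htot3R]

/-- There is an absolute constant `N` such that for all `n ≥ N` and
constants `c_m ≥ 2`, `c_k ≥ c_m + 1` (with `n` large enough that `k < n` and
`k·2^w ≤ n`, where `L = ⌈log₂ n⌉`, `k = L^{c_k}`, `w = ⌊log₂(n/k)⌋`,
`m = 2^{L^{c_m}}`): for every fixed set `T ⊆ F_2^{log₂ m}` of row indices with
`1 ≤ |T| ≤ 2^w / L²`, if the `k·w` polynomials `g^{(i,j)}` are drawn independently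
and uniformly at random from the polynomials of total degree at most `L`, then with
probability at least `1 − 2^{−k|T|/√L}`, the coordinatewise OR of the rows of
`M = [M^{(1)} ‖ … ‖ M^{(k)}]` indexed by `T` (whose columns are indexed by pairs
`(i, q) ∈ Fin k × F_2^w`, the column `(i,q)` being hit iff some `p ∈ T` has
`g^{(i,t)}(p) = q_t` for all `t`) has Hamming weight strictly greater than
`(1 − 1/√L)·k·|T|`. -/
theorem stmt4 : ∃ N : ℕ, ∀ n : ℕ, N ≤ n → ∀ cm ck : ℕ, 2 ≤ cm → cm + 1 ≤ ck →
    (Nat.clog 2 n) ^ ck < n →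
    (Nat.clog 2 n) ^ ck * 2 ^ (Nat.log 2 (n / (Nat.clog 2 n) ^ ck)) ≤ n →
    ∀ T : Finset (Fin ((Nat.clog 2 n) ^ cm) → ZMod 2), 0 < T.card →
    (T.card : ℝ) ≤ (2 : ℝ) ^ (Nat.log 2 (n / (Nat.clog 2 n) ^ ck)) / (Nat.clog 2 n : ℝ) ^ 2 →
    1 - (2 : ℝ) ^ (-(((Nat.clog 2 n) ^ ck * T.card : ℕ) : ℝ) / Real.sqrt (Nat.clog 2 n)) ≤
      (Nat.card {c : Fin ((Nat.clog 2 n) ^ ck) →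
            Fin (Nat.log 2 (n / (Nat.clog 2 n) ^ ck)) →
            CoefSp ((Nat.clog 2 n) ^ cm) (Nat.clog 2 n) //
          ((1 - 1 / Real.sqrt (Nat.clog 2 n)) * (Nat.clog 2 n) ^ ck * T.card : ℝ) <
            (Nat.card {iq : Fin ((Nat.clog 2 n) ^ ck) ×
                  (Fin (Nat.log 2 (n / (Nat.clog 2 n) ^ ck)) → ZMod 2) //
                ∃ p ∈ T, ∀ t, evalC (c iq.1 t) p = iq.2 t} : ℝ)} : ℝ) /
        (Nat.card (Fin ((Nat.clog 2 n) ^ ck) →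
            Fin (Nat.log 2 (n / (Nat.clog 2 n) ^ ck)) →
            CoefSp ((Nat.clog 2 n) ^ cm) (Nat.clog 2 n)) : ℝ) := by
  use 2 ^ 15 + 1
  intro n hn cm ck hcm hck hkn hkwn T hT0 hTbound
  have hL16 : 16 ≤ Nat.clog 2 n := by
    by_contra h
    push_neg at h
    have : n ≤ 2 ^ 15 := (Nat.clog_le_iff_le_pow (by norm_num)).mp (by omega)
    omega
  have hL2pos : (0:ℝ) < ((Nat.clog 2 n : ℕ) : ℝ) ^ 2 := by
    have : (0:ℝ) < ((Nat.clog 2 n : ℕ) : ℝ) := by exact_mod_cast (by omega : 0 < Nat.clog 2 n)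
    positivity
  have hsL2 : (T.card : ℝ) * ((Nat.clog 2 n : ℕ) : ℝ) ^ 2
      ≤ (2:ℝ) ^ (Nat.log 2 (n / (Nat.clog 2 n) ^ ck)) := by
    rw [← le_div_iff₀ hL2pos]
    exact hTbound
  have hk1 : 1 ≤ (Nat.clog 2 n) ^ ck := Nat.one_le_pow _ _ (by omega)
  have hs2w : T.card ≤ 2 ^ (Nat.log 2 (n / (Nat.clog 2 n) ^ ck)) := by
    have hL2_1 : (1:ℝ) ≤ ((Nat.clog 2 n : ℕ) : ℝ) ^ 2 := by
      have : (1:ℝ) ≤ ((Nat.clog 2 n : ℕ) : ℝ) := by exact_mod_cast (by omega : 1 ≤ Nat.clog 2 n)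
      nlinarith
    have h1 : (T.card : ℝ) ≤ (2:ℝ) ^ (Nat.log 2 (n / (Nat.clog 2 n) ^ ck)) := by
      have hs0 : (0:ℝ) ≤ (T.card : ℝ) := by positivity
      nlinarith [hsL2, hL2_1]
    have h2 : (T.card : ℝ) ≤ ((2 ^ (Nat.log 2 (n / (Nat.clog 2 n) ^ ck)) : ℕ) : ℝ) := by
      push_cast
      exact h1
    exact_mod_cast h2
  have h2wn : 2 ^ (Nat.log 2 (n / (Nat.clog 2 n) ^ ck)) ≤ n :=
    le_trans (Nat.le_mul_of_pos_left _ (by omega)) hkwn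
  have hn2L : n ≤ 2 ^ (Nat.clog 2 n) := Nat.le_pow_clog (by norm_num) n
  have hT2L : T.card < 2 ^ (Nat.clog 2 n + 1) := by
    have : (2:ℕ) ^ (Nat.clog 2 n) < 2 ^ (Nat.clog 2 n + 1) := Nat.pow_lt_pow_succ (by norm_num)
    omega
  exact main_lemma (Nat.clog 2 n) ck (Nat.log 2 (n / (Nat.clog 2 n) ^ ck))
    ((Nat.clog 2 n) ^ cm) ((Nat.clog 2 n) ^ ck) rfl hL16 T hT0 hT2L hsL2
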